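/- Let Φ(t,s) be the transition matrix of the linear system x' = A(t)x on ℝ⁺ with ‖Φ(t,s)‖ ≤ K e^{-α(t-s)} for t ≥ s ≥ 0, where K ≥ 1 and α > 0. Let f : ℝ⁺ × ℝⁿ → ℝⁿ be continuous, bounded by μ, and globally Lipschitz in the second variable with constant γ satisfying Kγ/α < 1. Then for each (τ,ξ) ∈ ℝ⁺ × ℝⁿ, the operator Γ on the Banach space of bounded continuous functions φ : ℝ⁺ → ℝⁿ defined by (Γφ)(t) = ∫₀ᵗ Φ(t,s) f(s, x(s,τ,ξ) + φ(s)) ds is a contraction, and hence has a unique fixed point, where x(·,τ,ξ) denotes the solution of x' = A(t)x with x(τ) = ξ. -/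

import Mathlib

open Real MeasureTheory Filter Topology

lemma aux_exp_int {α : ℝ} (hα : 0 < α) (t : ℝ) :
    ∫ s in (0:ℝ)..t, Real.exp (-α * (t - s)) ≤ 1 / α := by
  have hder : ∀ s : ℝ, HasDerivAt (fun u => Real.exp (α*u) / α) (Real.exp (α*s)) s := by
    intro s
    have h1 : HasDerivAt (fun u : ℝ => α*u) α s := by simpa using (hasDerivAt_id s).const_mul α
    have h2 := (h1.exp).div_const α
    simpa [mul_div_assoc, mul_comm, mul_div_cancel_left₀ _ hα.ne'] using h2
  have h1 : (∫ s in (0:ℝ)..t, Real.exp (α*s)) = Real.exp (α*t)/α - Real.exp (α*0)/α :=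
    intervalIntegral.integral_eq_sub_of_hasDerivAt (fun s _ => hder s)
      ((Real.continuous_exp.comp (continuous_const.mul continuous_id)).intervalIntegrable 0 t)
  have e1 : Real.exp (α*t) * Real.exp (-α*t) = 1 := by
    rw [← Real.exp_add]; ring_nf; exact Real.exp_zero
  have key : (∫ s in (0:ℝ)..t, Real.exp (-α * (t - s))) = 1/α - Real.exp (-α*t)/α := by
    calc (∫ s in (0:ℝ)..t, Real.exp (-α*(t-s)))
        = ∫ s in (0:ℝ)..t, Real.exp (α*s) * Real.exp (-α*t) := by
          congr 1; funext s; rw [← Real.exp_add]; ring_nf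
      _ = (∫ s in (0:ℝ)..t, Real.exp (α*s)) * Real.exp (-α*t) := by
          rw [intervalIntegral.integral_mul_const]
      _ = (Real.exp (α*t)/α - Real.exp (α*0)/α) * Real.exp (-α*t) := by rw [h1]
      _ = 1/α - Real.exp (-α*t)/α := by
          rw [sub_mul, div_mul_eq_mul_div, e1, mul_zero, Real.exp_zero,
            div_mul_eq_mul_div, one_mul]
  rw [key]
  have : 0 ≤ Real.exp (-α*t)/α := div_nonneg (Real.exp_nonneg _) hα.le
  linarith

lemma aux_bound {E : Type*} [NormedAddCommGroup E] [NormedSpace ℝ E] [CompleteSpace E]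
    (K α c : ℝ) (hα : 0 < α) (hK : 0 ≤ K) (hc : 0 ≤ c)
    (t : ℝ) (ht : 0 ≤ t) (G : ℝ → E)
    (hint : IntervalIntegrable G volume 0 t)
    (hG : ∀ s, 0 ≤ s → s ≤ t → ‖G s‖ ≤ K * c * Real.exp (-α * (t - s))) :
    ‖∫ s in (0:ℝ)..t, G s‖ ≤ K * c / α := by
  have hbc : Continuous fun s : ℝ => K * c * Real.exp (-α*(t-s)) := by
    exact continuous_const.mul (Real.continuous_exp.comp (by continuity))
  have h1 : ‖∫ s in (0:ℝ)..t, G s‖ ≤ |∫ s in (0:ℝ)..t, K * c * Real.exp (-α*(t-s))| := by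
    apply intervalIntegral.norm_integral_le_abs_of_norm_le _ (hbc.intervalIntegrable 0 t)
    filter_upwards [ae_restrict_mem measurableSet_uIoc] with s hs
    rw [Set.uIoc_of_le ht] at hs
    exact hG s hs.1.le hs.2
  have h2 : (∫ s in (0:ℝ)..t, K * c * Real.exp (-α*(t-s)))
      = K * c * ∫ s in (0:ℝ)..t, Real.exp (-α*(t-s)) := intervalIntegral.integral_const_mul _ _
  have h3 : (0:ℝ) ≤ ∫ s in (0:ℝ)..t, K * c * Real.exp (-α*(t-s)) :=
    intervalIntegral.integral_nonneg ht fun s _ =>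
      mul_nonneg (mul_nonneg hK hc) (Real.exp_nonneg _)
  rw [abs_of_nonneg h3, h2] at h1
  calc ‖∫ s in (0:ℝ)..t, G s‖ ≤ K * c * ∫ s in (0:ℝ)..t, Real.exp (-α*(t-s)) := h1
    _ ≤ K * c * (1/α) := by
        exact mul_le_mul_of_nonneg_left (aux_exp_int hα t) (mul_nonneg hK hc)
    _ = K * c / α := by ring


set_option maxHeartbeats 1000000 in
theorem aux_main {E : Type*} [NormedAddCommGroup E] [NormedSpace ℝ E] [FiniteDimensional ℝ E]
    (K α γ μ : ℝ)
    (hK : 1 ≤ K) (hα : 0 < α) (hγ : 0 < γ) (hμ : 0 < μ)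
    (Φ : ℝ → ℝ → (E →L[ℝ] E))
    (hΦid : ∀ s, Φ s s = ContinuousLinearMap.id ℝ E)
    (hΦcont1 : ∀ s (v : E), Continuous fun r => Φ r s v)
    (hΦcocycle : ∀ t s r, (Φ t s).comp (Φ s r) = Φ t r)
    (hΦdecay : ∀ s t, 0 ≤ s → s ≤ t → ‖Φ t s‖ ≤ K * Real.exp (-α * (t - s)))
    (f : ℝ → E → E)
    (hfcont : Continuous fun p : ℝ × E => f p.1 p.2)
    (hflip : ∀ t u v, 0 ≤ t → ‖f t u - f t v‖ ≤ γ * ‖u - v‖)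
    (hfbdd : ∀ t u, 0 ≤ t → ‖f t u‖ ≤ μ)
    (hsmall : K * γ / α < 1)
    (τ : ℝ) (ξ : E) :
    ∃ c, 0 ≤ c ∧ c < 1 ∧
      (∀ (φ ψ : ℝ → E) (D : ℝ), Continuous φ → Continuous ψ →
        (∀ s, 0 ≤ s → ‖φ s - ψ s‖ ≤ D) →
        ∀ t, 0 ≤ t →
          ‖(∫ s in (0:ℝ)..t, Φ t s (f s (Φ s τ ξ + φ s))) -
            ∫ s in (0:ℝ)..t, Φ t s (f s (Φ s τ ξ + ψ s))‖ ≤ c * D) ∧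
      (∃ z : ℝ → E,
        (Continuous z ∧ (∃ C, ∀ t, 0 ≤ t → ‖z t‖ ≤ C) ∧
          ∀ t, 0 ≤ t → z t = ∫ s in (0:ℝ)..t, Φ t s (f s (Φ s τ ξ + z s))) ∧
        ∀ z' : ℝ → E,
          (Continuous z' ∧ (∃ C, ∀ t, 0 ≤ t → ‖z' t‖ ≤ C) ∧
            ∀ t, 0 ≤ t → z' t = ∫ s in (0:ℝ)..t, Φ t s (f s (Φ s τ ξ + z' s))) →
          ∀ t, 0 ≤ t → z t = z' t) := by

  have hK0 : (0:ℝ) < K := lt_of_lt_of_le one_pos hK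
  have hc0 : (0:ℝ) ≤ K * γ / α := by positivity
  -- cocycle consequences
  have hΦts : ∀ t s (u : E), Φ t s u = Φ t 0 (Φ 0 s u) := by
    intro t s u
    rw [← hΦcocycle t 0 s]; rfl
  have contΦ : ∀ s, Continuous fun t => Φ t s := fun s =>
    continuous_clm_apply.mpr fun v => hΦcont1 s v
  -- units
  have hunit : ∀ s : ℝ, ∃ u : (E →L[ℝ] E)ˣ, (u : E →L[ℝ] E) = Φ s 0 ∧ ((u⁻¹ : _ˣ) : E →L[ℝ] E) = Φ 0 s := by
    intro s
    refine ⟨⟨Φ s 0, Φ 0 s, ?_, ?_⟩, rfl, rfl⟩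
    · have h := hΦcocycle s 0 s
      rw [hΦid s] at h
      exact h
    · have h := hΦcocycle 0 s 0
      rw [hΦid 0] at h
      exact h
  have contΦ0 : Continuous fun s : ℝ => Φ 0 s := by
    rw [continuous_iff_continuousAt]
    intro s
    obtain ⟨u, hu1, hu2⟩ := hunit s
    have : (fun s : ℝ => Φ 0 s) = fun s => Ring.inverse (Φ s 0) := by
      funext r
      obtain ⟨v, hv1, hv2⟩ := hunit r
      rw [← hv1, Ring.inverse_unit, hv2]
    rw [this]
    have h1 : ContinuousAt Ring.inverse (Φ s 0) := by
      rw [← hu1]; exact NormedRing.inverse_continuousAt u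
    exact ContinuousAt.comp (x := s) h1 ((contΦ 0).continuousAt)
  have contx : Continuous fun s => Φ s τ ξ := hΦcont1 τ ξ
  -- integrand continuity
  have contg : ∀ (φ : ℝ → E), Continuous φ →
      Continuous (fun s => Φ 0 s (f s (Φ s τ ξ + φ s))) := by
    intro φ hφ
    have hfc : Continuous fun s : ℝ => f s (Φ s τ ξ + φ s) := by
      have := hfcont.comp (continuous_id.prodMk (contx.add hφ))
      exact this
    exact contΦ0.clm_apply hfc
  have contInteg : ∀ (φ : ℝ → E), Continuous φ → ∀ t,
      Continuous (fun s => Φ t s (f s (Φ s τ ξ + φ s))) := by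
    intro φ hφ t
    have : (fun s => Φ t s (f s (Φ s τ ξ + φ s)))
        = fun s => Φ t 0 (Φ 0 s (f s (Φ s τ ξ + φ s))) := by
      funext s; exact hΦts t s _
    rw [this]
    exact (Φ t 0).continuous.comp (contg φ hφ)
  -- the map F
  set F : (ℝ → E) → ℝ → E := fun φ t => ∫ s in (0:ℝ)..t, Φ t s (f s (Φ s τ ξ + φ s)) with hF
  have contF : ∀ (φ : ℝ → E), Continuous φ → Continuous (F φ) := by
    intro φ hφ
    have hrepr : F φ = fun t => Φ t 0 (∫ s in (0:ℝ)..t, Φ 0 s (f s (Φ s τ ξ + φ s))) := by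
      funext t
      calc F φ t = ∫ s in (0:ℝ)..t, Φ t 0 (Φ 0 s (f s (Φ s τ ξ + φ s))) := by
            simp only [hF]
            congr 1; funext s; exact hΦts t s _
        _ = Φ t 0 (∫ s in (0:ℝ)..t, Φ 0 s (f s (Φ s τ ξ + φ s))) :=
            (Φ t 0).intervalIntegral_comp_comm ((contg φ hφ).intervalIntegrable 0 t)
    rw [hrepr]
    exact (contΦ 0).clm_apply
      (intervalIntegral.continuous_primitive (fun a b => (contg φ hφ).intervalIntegrable a b) 0)
  -- uniform bound
  have Fbdd : ∀ (φ : ℝ → E), Continuous φ → ∀ t, 0 ≤ t → ‖F φ t‖ ≤ K * μ / α := by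
    intro φ hφ t ht
    apply aux_bound K α μ hα hK0.le hμ.le t ht _ ((contInteg φ hφ t).intervalIntegrable 0 t)
    intro s hs0 hst
    calc ‖Φ t s (f s (Φ s τ ξ + φ s))‖ ≤ ‖Φ t s‖ * ‖f s (Φ s τ ξ + φ s)‖ :=
          (Φ t s).le_opNorm _
      _ ≤ (K * Real.exp (-α * (t - s))) * μ := by
          apply mul_le_mul (hΦdecay s t hs0 hst) (hfbdd s _ hs0) (norm_nonneg _)
          positivity
      _ = K * μ * Real.exp (-α * (t - s)) := by ring
  -- contraction estimate
  have key : ∀ (φ ψ : ℝ → E) (D : ℝ), Continuous φ → Continuous ψ →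
      (∀ s, 0 ≤ s → ‖φ s - ψ s‖ ≤ D) → ∀ t, 0 ≤ t →
      ‖F φ t - F ψ t‖ ≤ (K * γ / α) * D := by
    intro φ ψ D hφ hψ hD t ht
    have hD0 : 0 ≤ D := le_trans (norm_nonneg (φ 0 - ψ 0)) (hD 0 le_rfl)
    have hsub : F φ t - F ψ t
        = ∫ s in (0:ℝ)..t, Φ t s (f s (Φ s τ ξ + φ s) - f s (Φ s τ ξ + ψ s)) := by
      rw [hF]
      simp only
      rw [← intervalIntegral.integral_sub ((contInteg φ hφ t).intervalIntegrable 0 t)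
        ((contInteg ψ hψ t).intervalIntegrable 0 t)]
      congr 1; funext s; rw [map_sub]
    rw [hsub]
    have hcont : Continuous (fun s => Φ t s (f s (Φ s τ ξ + φ s) - f s (Φ s τ ξ + ψ s))) := by
      have : (fun s => Φ t s (f s (Φ s τ ξ + φ s) - f s (Φ s τ ξ + ψ s)))
          = fun s => Φ t s (f s (Φ s τ ξ + φ s)) - Φ t s (f s (Φ s τ ξ + ψ s)) := by
        funext s; rw [map_sub]
      rw [this]
      exact (contInteg φ hφ t).sub (contInteg ψ hψ t)
    have := aux_bound K α (γ * D) hα hK0.le (by positivity) t ht _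
      (hcont.intervalIntegrable 0 t) ?_
    · calc ‖∫ s in (0:ℝ)..t, Φ t s (f s (Φ s τ ξ + φ s) - f s (Φ s τ ξ + ψ s))‖
          ≤ K * (γ * D) / α := this
        _ = (K * γ / α) * D := by ring
    · intro s hs0 hst
      calc ‖Φ t s (f s (Φ s τ ξ + φ s) - f s (Φ s τ ξ + ψ s))‖
          ≤ ‖Φ t s‖ * ‖f s (Φ s τ ξ + φ s) - f s (Φ s τ ξ + ψ s)‖ := (Φ t s).le_opNorm _
        _ ≤ (K * Real.exp (-α * (t - s))) * (γ * D) := by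
            apply mul_le_mul (hΦdecay s t hs0 hst) ?_ (norm_nonneg _) (by positivity)
            calc ‖f s (Φ s τ ξ + φ s) - f s (Φ s τ ξ + ψ s)‖
                ≤ γ * ‖(Φ s τ ξ + φ s) - (Φ s τ ξ + ψ s)‖ := hflip s _ _ hs0
              _ = γ * ‖φ s - ψ s‖ := by congr 1; rw [add_sub_add_left_eq_sub]
              _ ≤ γ * D := mul_le_mul_of_nonneg_left (hD s hs0) hγ.le
        _ = K * (γ * D) * Real.exp (-α * (t - s)) := by ring
  refine ⟨K * γ / α, hc0, hsmall, fun φ ψ D hφ hψ hD t ht => key φ ψ D hφ hψ hD t ht, ?_⟩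
  -- Existence via Banach fixed point on bounded continuous functions
  have contmax : Continuous (fun t : ℝ => max t 0) := continuous_id.max continuous_const
  set Γ : BoundedContinuousFunction ℝ E → BoundedContinuousFunction ℝ E := fun φ =>
    BoundedContinuousFunction.ofNormedAddCommGroup (fun t => F φ (max t 0))
      ((contF φ φ.continuous).comp contmax) (K * μ / α)
      (fun t => Fbdd φ φ.continuous (max t 0) (le_max_right t 0)) with hΓ
  have hΓapp : ∀ (φ : BoundedContinuousFunction ℝ E) (t : ℝ), Γ φ t = F φ (max t 0) := by
    intro φ t; rfl
  set c' : NNReal := ⟨K * γ / α, hc0⟩ with hc'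
  have hlip : LipschitzWith c' Γ := by
    apply LipschitzWith.of_dist_le_mul
    intro φ ψ
    apply (BoundedContinuousFunction.dist_le (by positivity)).mpr
    intro t
    rw [dist_eq_norm, hΓapp, hΓapp]
    calc ‖F φ (max t 0) - F ψ (max t 0)‖ ≤ (K * γ / α) * dist φ ψ := by
          apply key φ ψ (dist φ ψ) φ.continuous ψ.continuous ?_ (max t 0) (le_max_right t 0)
          intro s _
          rw [← dist_eq_norm]
          exact BoundedContinuousFunction.dist_coe_le_dist s
      _ = (c' : ℝ) * dist φ ψ := rfl
  have hcw : ContractingWith c' Γ := ⟨by exact_mod_cast hsmall, hlip⟩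
  obtain ⟨z₀, hz₀⟩ : ∃ z₀, Function.IsFixedPt Γ z₀ := ⟨hcw.fixedPoint Γ, hcw.fixedPoint_isFixedPt⟩
  have hzfix : ∀ t, 0 ≤ t → (z₀ : ℝ → E) t = F (z₀ : ℝ → E) t := by
    intro t ht
    conv_lhs => rw [← hz₀]
    rw [hΓapp, max_eq_left ht]
  refine ⟨(z₀ : ℝ → E), ⟨z₀.continuous, ⟨‖z₀‖, fun t _ => z₀.norm_coe_le_norm t⟩, hzfix⟩, ?_⟩
  -- uniqueness
  rintro z' ⟨hz'c, ⟨C', hC'⟩, hz'fix⟩ t ht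
  have hC'0 : 0 ≤ C' := le_trans (norm_nonneg _) (hC' 0 le_rfl)
  set B : ℝ := ‖z₀‖ + C' with hB
  have hiter : ∀ k : ℕ, ∀ s, 0 ≤ s → ‖(z₀ : ℝ → E) s - z' s‖ ≤ (K * γ / α) ^ k * B := by
    intro k
    induction k with
    | zero =>
      intro s hs
      simp only [pow_zero, one_mul, hB]
      calc ‖(z₀ : ℝ → E) s - z' s‖ ≤ ‖(z₀ : ℝ → E) s‖ + ‖z' s‖ := norm_sub_le _ _
        _ ≤ ‖z₀‖ + C' := add_le_add (z₀.norm_coe_le_norm s) (hC' s hs)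
    | succ k ih =>
      intro s hs
      rw [hzfix s hs, hz'fix s hs]
      calc ‖F (z₀ : ℝ → E) s - F z' s‖ ≤ (K * γ / α) * ((K * γ / α) ^ k * B) :=
            key _ _ _ z₀.continuous hz'c ih s hs
        _ = (K * γ / α) ^ (k + 1) * B := by ring
  have hlim : Tendsto (fun k : ℕ => (K * γ / α) ^ k * B) atTop (nhds 0) := by
    rw [show (0:ℝ) = 0 * B by ring]
    exact (tendsto_pow_atTop_nhds_zero_of_lt_one hc0 hsmall).mul_const B
  have : ‖(z₀ : ℝ → E) t - z' t‖ ≤ 0 :=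
    ge_of_tendsto hlim (Eventually.of_forall fun k => hiter k t ht)
  rw [← sub_eq_zero]
  exact norm_le_zero_iff.mp this


theorem stmt0 (n : ℕ) (K α γ μ M : ℝ)
    (hK : 1 ≤ K) (hα : 0 < α) (hγ : 0 < γ) (hμ : 0 < μ) (hM : 0 < M)
    (A : ℝ → (EuclideanSpace ℝ (Fin n)) →L[ℝ] (EuclideanSpace ℝ (Fin n)))
    (hAcont : Continuous A) (hAbdd : ∀ t, 0 ≤ t → ‖A t‖ ≤ M)
    (Φ : ℝ → ℝ → ((EuclideanSpace ℝ (Fin n)) →L[ℝ] (EuclideanSpace ℝ (Fin n))))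
    (hΦid : ∀ s, Φ s s = ContinuousLinearMap.id ℝ (EuclideanSpace ℝ (Fin n)))
    (hΦderiv : ∀ s ξ t, HasDerivAt (fun r => Φ r s ξ) (A t (Φ t s ξ)) t)
    (hΦcocycle : ∀ t s r, (Φ t s).comp (Φ s r) = Φ t r)
    (hΦdecay : ∀ s t, 0 ≤ s → s ≤ t → ‖Φ t s‖ ≤ K * Real.exp (-α * (t - s)))
    (f : ℝ → (EuclideanSpace ℝ (Fin n)) → (EuclideanSpace ℝ (Fin n)))
    (hfcont : Continuous fun p : ℝ × (EuclideanSpace ℝ (Fin n)) => f p.1 p.2)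
    (hflip : ∀ t u v, 0 ≤ t → ‖f t u - f t v‖ ≤ γ * ‖u - v‖)
    (hfbdd : ∀ t u, 0 ≤ t → ‖f t u‖ ≤ μ)
    (hsmall : K * γ / α < 1)
    (τ : ℝ) (hτ : 0 ≤ τ) (ξ : (EuclideanSpace ℝ (Fin n))) :
    ∃ c, 0 ≤ c ∧ c < 1 ∧
      (∀ (φ ψ : ℝ → (EuclideanSpace ℝ (Fin n))) (D : ℝ), Continuous φ → Continuous ψ →
        (∀ s, 0 ≤ s → ‖φ s - ψ s‖ ≤ D) →
        ∀ t, 0 ≤ t →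
          ‖(∫ s in (0:ℝ)..t, Φ t s (f s (Φ s τ ξ + φ s))) -
            ∫ s in (0:ℝ)..t, Φ t s (f s (Φ s τ ξ + ψ s))‖ ≤ c * D) ∧
      (∃ z : ℝ → (EuclideanSpace ℝ (Fin n)),
        (Continuous z ∧ (∃ C, ∀ t, 0 ≤ t → ‖z t‖ ≤ C) ∧
          ∀ t, 0 ≤ t → z t = ∫ s in (0:ℝ)..t, Φ t s (f s (Φ s τ ξ + z s))) ∧
        ∀ z' : ℝ → (EuclideanSpace ℝ (Fin n)),
          (Continuous z' ∧ (∃ C, ∀ t, 0 ≤ t → ‖z' t‖ ≤ C) ∧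
            ∀ t, 0 ≤ t → z' t = ∫ s in (0:ℝ)..t, Φ t s (f s (Φ s τ ξ + z' s))) →
          ∀ t, 0 ≤ t → z t = z' t) := by
  apply aux_main K α γ μ hK hα hγ hμ Φ hΦid
    (fun s v => continuous_iff_continuousAt.mpr fun t => (hΦderiv s v t).continuousAt)
    hΦcocycle hΦdecay f hfcont hflip hfbdd hsmall τ ξ
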